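/- There exists a constant C > 0 such that for all ℓ ∈ ℕ, the total number of bridge-lists of combined length ℓ with strictly decreasing heights (of any list length j between 1 and ℓ) is at most exp(C·ℓ^{1/2}) · μ^ℓ. -/

import Mathlib

/-- A self-avoiding walk of length `n` on `ℤ²`, starting at the origin, with
nearest-neighbour steps, padded to be constant after time `n`. -/
def IsSAW (n : ℕ) (γ : ℕ → ℤ × ℤ) : Prop :=
  γ 0 = (0, 0) ∧
  (∀ i < n, |(γ (i + 1)).1 - (γ i).1| + |(γ (i + 1)).2 - (γ i).2| = 1) ∧
  (∀ i ≤ n, ∀ j ≤ n, γ i = γ j → i = j) ∧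
  (∀ i, n ≤ i → γ i = γ n)

/-- The number of self-avoiding walks of length `n` on `ℤ²` starting at the origin. -/
noncomputable def cSAW (n : ℕ) : ℕ := Nat.card {γ : ℕ → ℤ × ℤ // IsSAW n γ}

/-- The connective constant `μ` of `ℤ²`, i.e. `lim_n cSAW n ^ (1/n)`, which by
submultiplicativity equals the infimum `⨅_{n ≥ 1} (cSAW n)^(1/n)`. -/
noncomputable def mu : ℝ := ⨅ n : ℕ, ((cSAW (n + 1) : ℝ)) ^ ((1 : ℝ) / (n + 1))

/-- A self-avoiding bridge of length `n` on `ℤ²`: a self-avoiding walk `γ` from the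
origin with `0 < y(γ k) ≤ y(γ n)` for all `1 ≤ k ≤ n`. -/
def IsBridge (n : ℕ) (γ : ℕ → ℤ × ℤ) : Prop :=
  IsSAW n γ ∧ ∀ k : ℕ, 0 < k → k ≤ n → 0 < (γ k).2 ∧ (γ k).2 ≤ (γ n).2

/-- The number of self-avoiding bridges of length `n` on `ℤ²`. -/
noncomputable def cSAB (n : ℕ) : ℕ := Nat.card {γ : ℕ → ℤ × ℤ // IsBridge n γ}

/-- A half-space self-avoiding walk of length `n` on `ℤ²`: a self-avoiding walk `γ`
from the origin with `y(γ k) > 0` for all `0 < k ≤ n`. -/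
def IsHSW (n : ℕ) (γ : ℕ → ℤ × ℤ) : Prop :=
  IsSAW n γ ∧ ∀ k : ℕ, 0 < k → k ≤ n → 0 < (γ k).2

/-- The number of half-space self-avoiding walks of length `n` on `ℤ²`. -/
noncomputable def cHSW (n : ℕ) : ℕ := Nat.card {γ : ℕ → ℤ × ℤ // IsHSW n γ}

/-- The bridge-product space `BΠ_{ℓ,j}`: ordered lists of `j` self-avoiding bridges
(recorded with their lengths) whose lengths sum to `ℓ` and whose heights form a
strictly decreasing sequence. -/
def BPi (ℓ j : ℕ) : Set (Fin j → ℕ × (ℕ → ℤ × ℤ)) :=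
  {b | (∀ i, IsBridge (b i).1 (b i).2) ∧ (∑ i, (b i).1) = ℓ ∧
    StrictAnti (fun i : Fin j => ((b i).2 (b i).1).2)}


/-! ### Basic lemmas -/

lemma saw_step_bound {n : ℕ} {γ : ℕ → ℤ × ℤ} (h : IsSAW n γ) {i : ℕ} (hi : i < n) :
    |(γ (i + 1)).1 - (γ i).1| ≤ 1 ∧ |(γ (i + 1)).2 - (γ i).2| ≤ 1 := by
  have := h.2.1 i hi
  constructor <;> [have := abs_nonneg ((γ (i + 1)).2 - (γ i).2);
    have := abs_nonneg ((γ (i + 1)).1 - (γ i).1)] <;> omega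

lemma saw_coord_bound {n : ℕ} {γ : ℕ → ℤ × ℤ} (h : IsSAW n γ) :
    ∀ t, t ≤ n → |(γ t).1| ≤ (t : ℤ) ∧ |(γ t).2| ≤ (t : ℤ) := by
  intro t
  induction t with
  | zero => intro _; simp [h.1]
  | succ t ih =>
    intro ht
    obtain ⟨ih1, ih2⟩ := ih (by omega)
    obtain ⟨s1, s2⟩ := saw_step_bound h (show t < n by omega)
    have e1 : |(γ (t+1)).1| ≤ |(γ t).1| + |(γ (t+1)).1 - (γ t).1| := by
      have := abs_add_le ((γ t).1) ((γ (t+1)).1 - (γ t).1); simpa using this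
    have e2 : |(γ (t+1)).2| ≤ |(γ t).2| + |(γ (t+1)).2 - (γ t).2| := by
      have := abs_add_le ((γ t).2) ((γ (t+1)).2 - (γ t).2); simpa using this
    push_cast
    omega

lemma saw_pad {n : ℕ} {γ : ℕ → ℤ × ℤ} (h : IsSAW n γ) (t : ℕ) : γ t = γ (min t n) := by
  rcases le_total t n with ht | ht
  · rw [min_eq_left ht]
  · rw [min_eq_right ht, h.2.2.2 t ht]

lemma finite_isSAW (n : ℕ) : Finite {γ : ℕ → ℤ × ℤ // IsSAW n γ} := by
  haveI : Finite (Set.Icc ((-(n:ℤ), -(n:ℤ))) (((n:ℤ), (n:ℤ)))) := (Set.finite_Icc _ _).to_subtype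
  have mem : ∀ γ : {γ : ℕ → ℤ × ℤ // IsSAW n γ}, ∀ i : Fin (n+1),
      (γ.1 i) ∈ Set.Icc ((-(n:ℤ), -(n:ℤ))) (((n:ℤ), (n:ℤ))) := by
    intro γ i
    obtain ⟨h1, h2⟩ := saw_coord_bound γ.2 i (Nat.lt_succ_iff.mp i.2)
    have hi : (i : ℤ) ≤ (n : ℤ) := by exact_mod_cast Nat.lt_succ_iff.mp i.2
    rw [abs_le] at h1 h2
    constructor <;> constructor <;> simp <;> omega
  apply Finite.of_injective (fun γ : {γ : ℕ → ℤ × ℤ // IsSAW n γ} =>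
    (fun i : Fin (n+1) => (⟨γ.1 i, mem γ i⟩ : Set.Icc ((-(n:ℤ), -(n:ℤ))) (((n:ℤ), (n:ℤ))))))
  intro γ δ hγδ
  have key : ∀ t : ℕ, t ≤ n → γ.1 t = δ.1 t := by
    intro t ht
    have := congrFun hγδ ⟨t, by omega⟩
    simpa using congrArg Subtype.val this
  apply Subtype.ext; funext t
  rw [saw_pad γ.2 t, saw_pad δ.2 t]
  exact key _ (min_le_right t n)

lemma finite_isBridge (n : ℕ) : Finite {γ : ℕ → ℤ × ℤ // IsBridge n γ} := by
  haveI := finite_isSAW n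
  exact Finite.of_injective
    (fun γ : {γ : ℕ → ℤ × ℤ // IsBridge n γ} => (⟨γ.1, γ.2.1⟩ : {γ : ℕ → ℤ × ℤ // IsSAW n γ}))
    (fun a b h => Subtype.ext (by simpa [Subtype.ext_iff] using h))

/-- The straight vertical walk. -/
lemma isBridge_straight (n : ℕ) : IsBridge n (fun t => ((0:ℤ), (min t n : ℤ))) := by
  refine ⟨⟨by simp, ?_, ?_, ?_⟩, ?_⟩
  · intro i hi
    have : |((min (i+1) n : ℕ) : ℤ) - ((min i n : ℕ) : ℤ)| = 1 := by
      rw [show ((min (i+1) n : ℕ) : ℤ) - ((min i n : ℕ) : ℤ) = 1 by omega]; norm_num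
    simpa using this
  · intro i hi j hj hij
    simp only [Prod.mk.injEq] at hij
    omega
  · intro i hi
    have h : ((i:ℤ) ⊓ (n:ℤ)) = ((n:ℤ) ⊓ (n:ℤ)) := by
      rw [min_eq_right (by exact_mod_cast hi : (n:ℤ) ≤ (i:ℤ)), min_self]
    simp only [h]
  · intro k hk hkn
    constructor <;> simp <;> omega

lemma one_le_cSAW (n : ℕ) : 1 ≤ cSAW n := by
  haveI := finite_isSAW n
  haveI : Nonempty {γ : ℕ → ℤ × ℤ // IsSAW n γ} := ⟨⟨_, (isBridge_straight n).1⟩⟩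
  exact Nat.card_pos

lemma one_le_cSAB (n : ℕ) : 1 ≤ cSAB n := by
  haveI := finite_isBridge n
  haveI : Nonempty {γ : ℕ → ℤ × ℤ // IsBridge n γ} := ⟨⟨_, isBridge_straight n⟩⟩
  exact Nat.card_pos

lemma cSAB_le_cSAW (n : ℕ) : cSAB n ≤ cSAW n := by
  haveI := finite_isSAW n
  exact Nat.card_le_card_of_injective
    (fun γ : {γ : ℕ → ℤ × ℤ // IsBridge n γ} => (⟨γ.1, γ.2.1⟩ : {γ : ℕ → ℤ × ℤ // IsSAW n γ}))
    (fun a b h => Subtype.ext (by simpa [Subtype.ext_iff] using h))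

lemma bridge_height_nonneg {n : ℕ} {γ : ℕ → ℤ × ℤ} (h : IsBridge n γ) : 0 ≤ (γ n).2 := by
  rcases Nat.eq_zero_or_pos n with rfl | hn
  · simp [h.1.1]
  · exact le_of_lt (h.2 n hn le_rfl).1

lemma bridge_y_le {n : ℕ} {γ : ℕ → ℤ × ℤ} (h : IsBridge n γ) {t : ℕ} (ht : t ≤ n) :
    (γ t).2 ≤ (γ n).2 := by
  rcases Nat.eq_zero_or_pos t with rfl | htpos
  · simpa [h.1.1] using bridge_height_nonneg h
  · exact (h.2 t htpos ht).2

lemma bridge_y_nonneg {n : ℕ} {γ : ℕ → ℤ × ℤ} (h : IsBridge n γ) (t : ℕ) :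
    0 ≤ (γ t).2 := by
  rw [saw_pad h.1 t]
  rcases Nat.eq_zero_or_pos (min t n) with hmin | hmin
  · rw [hmin]; simp [h.1.1]
  · exact le_of_lt (h.2 _ hmin (min_le_right t n)).1

lemma bridge_height_le_length {n : ℕ} {γ : ℕ → ℤ × ℤ} (h : IsBridge n γ) :
    (γ n).2 ≤ (n : ℤ) :=
  le_trans (le_abs_self _) (saw_coord_bound h.1 n le_rfl).2

/-! ### Concatenation of walks -/

def cat (m : ℕ) (γ δ : ℕ → ℤ × ℤ) : ℕ → ℤ × ℤ := fun t => γ (min t m) + δ (t - m)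

lemma cat_of_le {m : ℕ} {γ δ : ℕ → ℤ × ℤ} (hδ0 : δ 0 = 0) {t : ℕ} (ht : t ≤ m) :
    cat m γ δ t = γ t := by
  simp [cat, min_eq_left ht, Nat.sub_eq_zero_of_le ht, hδ0]

lemma cat_of_ge {m : ℕ} (γ δ : ℕ → ℤ × ℤ) {t : ℕ} (ht : m ≤ t) :
    cat m γ δ t = γ m + δ (t - m) := by
  simp [cat, min_eq_right ht]

lemma isBridge_cat {m n : ℕ} {γ δ : ℕ → ℤ × ℤ} (hγ : IsBridge m γ) (hδ : IsBridge n δ) :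
    IsBridge (m + n) (cat m γ δ) := by
  have hδ0 : δ 0 = 0 := by have := hδ.1.1; simp [this]
  have ha : 0 ≤ (γ m).2 := bridge_height_nonneg hγ
  have hb : 0 ≤ (δ n).2 := bridge_height_nonneg hδ
  have hyle : ∀ t ≤ m, (cat m γ δ t).2 ≤ (γ m).2 := by
    intro t ht; rw [cat_of_le hδ0 ht]; exact bridge_y_le hγ ht
  have hygt : ∀ t, m < t → t ≤ m + n → (γ m).2 < (cat m γ δ t).2 := by
    intro t h1 h2
    rw [cat_of_ge _ _ (le_of_lt h1)]
    have : 0 < (δ (t - m)).2 := (hδ.2 (t - m) (by omega) (by omega)).1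
    simp only [Prod.snd_add]
    omega
  have hend : cat m γ δ (m + n) = γ m + δ n := by
    rw [cat_of_ge _ _ (Nat.le_add_right m n), show m + n - m = n by omega]
  refine ⟨⟨?_, ?_, ?_, ?_⟩, ?_⟩
  · rw [cat_of_le hδ0 (Nat.zero_le m)]; exact hγ.1.1
  · intro i hi
    rcases Nat.lt_or_ge i m with h | h
    · rw [cat_of_le hδ0 (by omega), cat_of_le hδ0 (by omega)]
      exact hγ.1.2.1 i h
    · rw [cat_of_ge _ _ (by omega), cat_of_ge _ _ h]
      have hstep := hδ.1.2.1 (i - m) (by omega)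
      have : i + 1 - m = (i - m) + 1 := by omega
      rw [this]
      simpa using hstep
  · intro u hu v hv huv
    rcases le_or_gt u m with h1 | h1 <;> rcases le_or_gt v m with h2 | h2
    · rw [cat_of_le hδ0 h1, cat_of_le hδ0 h2] at huv
      exact hγ.1.2.2.1 u h1 v h2 huv
    · refine absurd (congrArg Prod.snd huv) ?_
      have e1 := hyle u h1
      have e2 := hygt v h2 hv
      intro e; omega
    · refine absurd (congrArg Prod.snd huv) ?_
      have e1 := hyle v h2
      have e2 := hygt u h1 hu
      intro e; omega
    · rw [cat_of_ge _ _ (le_of_lt h1), cat_of_ge _ _ (le_of_lt h2)] at huv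
      have : δ (u - m) = δ (v - m) := by
        have := add_left_cancel huv; exact this
      have := hδ.1.2.2.1 (u - m) (by omega) (v - m) (by omega) this
      omega
  · intro i hi
    rw [hend, cat_of_ge _ _ (by omega)]
    congr 1
    exact hδ.1.2.2.2 (i - m) (by omega)
  · intro k hk hkn
    rw [hend]
    rcases le_or_gt k m with h | h
    · rw [cat_of_le hδ0 h]
      have h1 := (hγ.2 k hk h).1
      have h2 := bridge_y_le hγ h
      simp only [Prod.snd_add]
      exact ⟨by omega, by omega⟩
    · rw [cat_of_ge _ _ (le_of_lt h)]
      have h1 := (hδ.2 (k - m) (by omega) (by omega)).1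
      have h2 := bridge_y_le hδ (show k - m ≤ n by omega)
      simp only [Prod.snd_add]
      exact ⟨by omega, by omega⟩

lemma cat_height (m n : ℕ) (γ δ : ℕ → ℤ × ℤ) :
    cat m γ δ (m + n) = γ m + δ n := by
  rw [cat_of_ge _ _ (Nat.le_add_right m n), show m + n - m = n by omega]

lemma cat_left_recover {m : ℕ} {γ δ : ℕ → ℤ × ℤ} (hγ : IsSAW m γ) (hδ0 : δ 0 = 0)
    (t : ℕ) : γ t = cat m γ δ (min t m) := by
  rw [cat_of_le hδ0 (min_le_right t m)]
  exact saw_pad hγ t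

lemma cat_right_recover {m n : ℕ} {γ δ : ℕ → ℤ × ℤ} (hδ : IsSAW n δ) (hδ0 : δ 0 = 0)
    (t : ℕ) : δ t = cat m γ δ (m + min t n) - cat m γ δ m := by
  rw [cat_of_ge _ _ (Nat.le_add_right m (min t n)), cat_of_le hδ0 (le_refl m)]
  have h1 : m + min t n - m = min t n := by omega
  rw [h1, ← saw_pad hδ t]
  abel

/-! ### Sub/super-multiplicativity -/

lemma cSAW_submul (m n : ℕ) : cSAW (m + n) ≤ cSAW m * cSAW n := by
  haveI := finite_isSAW m
  haveI := finite_isSAW n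
  haveI := finite_isSAW (m + n)
  rw [cSAW, cSAW, cSAW, ← Nat.card_prod]
  have pf1 : ∀ γ : {γ : ℕ → ℤ × ℤ // IsSAW (m + n) γ}, IsSAW m (fun t => γ.1 (min t m)) := by
    intro ⟨γ, h0, hstep, hinj, hpad⟩
    refine ⟨by simpa using h0, ?_, ?_, ?_⟩
    · intro i hi
      dsimp only
      rw [show min (i+1) m = i+1 by omega, show min i m = i by omega]
      exact hstep i (by omega)
    · intro u hu v hv huv
      dsimp only at huv
      rw [show min u m = u by omega, show min v m = v by omega] at huv
      exact hinj u (by omega) v (by omega) huv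
    · intro i hi; dsimp only; rw [show min i m = m by omega, min_self]
  have pf2 : ∀ γ : {γ : ℕ → ℤ × ℤ // IsSAW (m + n) γ},
      IsSAW n (fun t => γ.1 (m + min t n) - γ.1 m) := by
    intro ⟨γ, h0, hstep, hinj, hpad⟩
    refine ⟨by simp; rfl, ?_, ?_, ?_⟩
    · intro i hi
      dsimp only
      rw [show min (i+1) n = i+1 by omega, show min i n = i by omega,
        show m + (i+1) = (m + i) + 1 by omega]
      have := hstep (m + i) (by omega)
      simpa using this
    · intro u hu v hv huv
      dsimp only at huv
      rw [show min u n = u by omega, show min v n = v by omega] at huv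
      have : γ (m + u) = γ (m + v) := by
        have := sub_left_injective huv; exact this
      have := hinj (m + u) (by omega) (m + v) (by omega) this
      omega
    · intro i hi; dsimp only; rw [show min i n = n by omega, min_self]
  apply Nat.card_le_card_of_injective
    (fun γ : {γ : ℕ → ℤ × ℤ // IsSAW (m + n) γ} =>
      ((⟨fun t => γ.1 (min t m), pf1 γ⟩ : {γ : ℕ → ℤ × ℤ // IsSAW m γ}),
       (⟨fun t => γ.1 (m + min t n) - γ.1 m, pf2 γ⟩ : {γ : ℕ → ℤ × ℤ // IsSAW n γ})))
  intro γ δ h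
  rw [Prod.mk.injEq, Subtype.mk.injEq, Subtype.mk.injEq] at h
  obtain ⟨hL, hR⟩ := h
  have recov : ∀ ε : {γ : ℕ → ℤ × ℤ // IsSAW (m + n) γ}, ∀ t : ℕ,
      ε.1 t = (ε.1 (m + min (t - m) n) - ε.1 m) + ε.1 (min (min t m) m) := by
    intro ⟨ε, h0, hstep, hinj, hpad⟩ t
    simp only [min_self, min_assoc]
    rcases le_or_gt t m with h | h
    · rw [show t - m = 0 by omega, show min t m = t by omega]
      simp
    · rw [show min t m = m by omega]
      rcases le_or_gt t (m + n) with h2 | h2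
      · rw [show min (t - m) n = t - m by omega, show m + (t - m) = t by omega]
        abel
      · rw [show min (t - m) n = n by omega]
        have : ε t = ε (m + n) := by
          rw [hpad t (by omega)]
        rw [this]
        abel
  apply Subtype.ext; funext t
  rw [recov γ t, recov δ t]
  rw [show γ.1 (m + min (t - m) n) - γ.1 m = (fun s => γ.1 (m + min s n) - γ.1 m) (t - m) from rfl,
    hR, show γ.1 (min (min t m) m) = (fun s => γ.1 (min s m)) (min t m) from rfl, hL]

lemma cSAB_supermul (m n : ℕ) : cSAB m * cSAB n ≤ cSAB (m + n) := by
  haveI := finite_isBridge m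
  haveI := finite_isBridge n
  haveI := finite_isBridge (m + n)
  rw [cSAB, cSAB, cSAB, ← Nat.card_prod]
  apply Nat.card_le_card_of_injective
    (fun p : {γ : ℕ → ℤ × ℤ // IsBridge m γ} × {γ : ℕ → ℤ × ℤ // IsBridge n γ} =>
      (⟨cat m p.1.1 p.2.1, isBridge_cat p.1.2 p.2.2⟩ : {γ : ℕ → ℤ × ℤ // IsBridge (m + n) γ}))
  intro p q h
  rw [Subtype.mk.injEq] at h
  have h10 : p.1.1 0 = 0 := by have := p.1.2.1.1; exact this
  have h20 : p.2.1 0 = 0 := by have := p.2.2.1.1; exact this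
  have h10' : q.1.1 0 = 0 := by have := q.1.2.1.1; exact this
  have h20' : q.2.1 0 = 0 := by have := q.2.2.1.1; exact this
  have e1 : p.1.1 = q.1.1 := by
    funext t
    rw [cat_left_recover p.1.2.1 h20 t, cat_left_recover q.1.2.1 h20' t, h]
  have e2 : p.2.1 = q.2.1 := by
    funext t
    rw [cat_right_recover (γ := p.1.1) (m := m) (n := n) p.2.2.1 h20 t,
      cat_right_recover (γ := q.1.1) (m := m) (n := n) q.2.2.1 h20' t, h]
  exact Prod.ext (Subtype.ext e1) (Subtype.ext e2)

lemma cSAB_pow_le (n k : ℕ) : cSAB n ^ k ≤ cSAB (n * k) := by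
  induction k with
  | zero => simpa using one_le_cSAB 0
  | succ k ih =>
    calc cSAB n ^ (k + 1) = cSAB n ^ k * cSAB n := by ring
    _ ≤ cSAB (n * k) * cSAB n := Nat.mul_le_mul_right _ ih
    _ ≤ cSAB (n * k + n) := cSAB_supermul _ _
    _ = cSAB (n * (k + 1)) := by ring_nf

/-! ### The connective constant bounds bridges -/

noncomputable def uSAW : ℕ → ℝ := fun n => Real.log (cSAW n)

lemma cSAW_pos_real (n : ℕ) : (0:ℝ) < (cSAW n : ℝ) := by
  exact_mod_cast Nat.lt_of_lt_of_le Nat.zero_lt_one (one_le_cSAW n)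

lemma uSAW_nonneg (n : ℕ) : 0 ≤ uSAW n :=
  Real.log_nonneg (by exact_mod_cast one_le_cSAW n)

lemma uSAW_subadditive : Subadditive uSAW := by
  intro m n
  have hle : (cSAW (m + n) : ℝ) ≤ (cSAW m : ℝ) * (cSAW n : ℝ) := by
    exact_mod_cast cSAW_submul m n
  calc uSAW (m + n) ≤ Real.log ((cSAW m : ℝ) * (cSAW n : ℝ)) :=
        Real.log_le_log (cSAW_pos_real _) hle
    _ = uSAW m + uSAW n := Real.log_mul (ne_of_gt (cSAW_pos_real m)) (ne_of_gt (cSAW_pos_real n))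

lemma uSAW_bddBelow : BddBelow (Set.range fun n : ℕ => uSAW n / n) := by
  refine ⟨0, fun x hx => ?_⟩
  obtain ⟨n, rfl⟩ := hx
  exact div_nonneg (uSAW_nonneg n) (Nat.cast_nonneg n)

lemma mu_eq_exp : mu = Real.exp uSAW_subadditive.lim := by
  have himage : ((fun n : ℕ => uSAW n / n) '' Set.Ici 1)
      = Set.range (fun k : ℕ => uSAW (k+1) / ((k:ℝ)+1)) := by
    ext x
    constructor
    · rintro ⟨n, hn, rfl⟩
      have hn' : 1 ≤ n := hn
      refine ⟨n - 1, ?_⟩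
      dsimp only
      rw [show n - 1 + 1 = n by omega]
      congr 1
      rw [show ((n - 1 : ℕ) : ℝ) = (n : ℝ) - 1 by push_cast [hn']; ring]
      ring
    · rintro ⟨k, rfl⟩
      refine ⟨k + 1, Nat.le_add_left 1 k, ?_⟩
      dsimp only
      push_cast
      ring_nf
  have hlim : uSAW_subadditive.lim = ⨅ k : ℕ, uSAW (k+1) / ((k:ℝ)+1) := by
    rw [Subadditive.lim, himage, iInf]
  have hbdd2 : BddBelow (Set.range fun k : ℕ => uSAW (k+1) / ((k:ℝ)+1)) := by
    refine ⟨0, fun x hx => ?_⟩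
    obtain ⟨k, rfl⟩ := hx
    exact div_nonneg (uSAW_nonneg _) (by positivity)
  have hterm : ∀ n : ℕ, ((cSAW (n+1) : ℝ)) ^ ((1:ℝ)/(n+1))
      = Real.exp (uSAW (n+1) / ((n:ℝ)+1)) := by
    intro n
    rw [Real.rpow_def_of_pos (cSAW_pos_real (n+1))]
    congr 1
    rw [mul_one_div]
    rfl
  rw [mu, hlim]
  rw [Monotone.map_ciInf_of_continuousAt (Real.continuous_exp.continuousAt)
    (fun a b hab => Real.exp_le_exp.2 hab) hbdd2]
  exact iInf_congr hterm

lemma mu_pos : 0 < mu := by rw [mu_eq_exp]; exact Real.exp_pos _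

lemma cSAB_le_mu_pow {n : ℕ} (hn : 1 ≤ n) : (cSAB n : ℝ) ≤ mu ^ n := by
  set L := uSAW_subadditive.lim with hL
  have hcb : (0:ℝ) < (cSAB n : ℝ) := by
    exact_mod_cast Nat.lt_of_lt_of_le Nat.zero_lt_one (one_le_cSAB n)
  have key : ∀ k : ℕ, 1 ≤ k → Real.log (cSAB n) / n ≤ uSAW (n*k) / ((n*k : ℕ) : ℝ) := by
    intro k hk
    have hpow : ((cSAB n : ℝ)) ^ k ≤ (cSAW (n*k) : ℝ) := by
      exact_mod_cast le_trans (cSAB_pow_le n k) (cSAB_le_cSAW (n*k))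
    have hlog : (k:ℝ) * Real.log (cSAB n) ≤ uSAW (n*k) := by
      rw [← Real.log_pow]
      exact Real.log_le_log (by positivity) hpow
    have hn0 : (0:ℝ) < (n:ℝ) := by exact_mod_cast hn
    have hk0 : (0:ℝ) < (k:ℝ) := by exact_mod_cast hk
    rw [div_le_div_iff₀ hn0 (by push_cast; positivity)]
    push_cast
    nlinarith [mul_le_mul_of_nonneg_right hlog (le_of_lt hn0)]
  have htend : Filter.Tendsto (fun k : ℕ => uSAW (n*k) / ((n*k : ℕ) : ℝ))
      Filter.atTop (nhds L) := by
    have h1 : Filter.Tendsto (fun k : ℕ => n * k) Filter.atTop Filter.atTop := by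
      apply Filter.tendsto_atTop_mono (fun k => Nat.le_mul_of_pos_left k (by omega))
      exact Filter.tendsto_id
    exact (uSAW_subadditive.tendsto_lim uSAW_bddBelow).comp h1
  have hle : Real.log (cSAB n) / n ≤ L :=
    ge_of_tendsto htend (Filter.eventually_atTop.2 ⟨1, fun k hk => key k hk⟩)
  have hn0 : (0:ℝ) < (n:ℝ) := by exact_mod_cast hn
  have : Real.log (cSAB n) ≤ n * L := by
    rw [div_le_iff₀ hn0] at hle; linarith [hle]
  calc (cSAB n : ℝ) = Real.exp (Real.log (cSAB n)) := (Real.exp_log hcb).symm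
    _ ≤ Real.exp ((n:ℝ) * L) := Real.exp_le_exp.2 this
    _ = Real.exp L ^ n := Real.exp_nat_mul L n
    _ = mu ^ n := by rw [mu_eq_exp]

/-! ### Lists of bridges -/

def hN (p : ℕ × (ℕ → ℤ × ℤ)) : ℕ := ((p.2 p.1).2).toNat

def sumLen (L : List (ℕ × (ℕ → ℤ × ℤ))) : ℕ := (L.map Prod.fst).sum

noncomputable def catList : List (ℕ × (ℕ → ℤ × ℤ)) → ℕ → ℤ × ℤ
  | [] => fun _ => (0, 0)
  | p :: L => cat p.1 p.2 (catList L)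

def hSet (L : List (ℕ × (ℕ → ℤ × ℤ))) : Finset ℕ := (L.map hN).toFinset

lemma isBridge_nil : IsBridge 0 (fun _ => ((0:ℤ), (0:ℤ))) := by
  refine ⟨⟨rfl, by omega, by omega, fun i _ => rfl⟩, by omega⟩

lemma catList_isBridge {L : List (ℕ × (ℕ → ℤ × ℤ))} (h : ∀ p ∈ L, IsBridge p.1 p.2) :
    IsBridge (sumLen L) (catList L) := by
  induction L with
  | nil => exact isBridge_nil
  | cons p M ih =>
    have h1 : IsBridge p.1 p.2 := h p List.mem_cons_self
    have h2 : IsBridge (sumLen M) (catList M) := ih (fun q hq => h q (List.mem_cons_of_mem p hq))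
    have : sumLen (p :: M) = p.1 + sumLen M := by simp [sumLen]
    rw [this]
    exact isBridge_cat h1 h2

lemma catList_zero {L : List (ℕ × (ℕ → ℤ × ℤ))} (h : ∀ p ∈ L, IsBridge p.1 p.2) :
    catList L 0 = (0, 0) :=
  (catList_isBridge h).1.1

/-- Characterisation of the first split point of a two-piece concatenation. -/
lemma cat_split_char {m r : ℕ} {γ δ : ℕ → ℤ × ℤ} (hγ : IsBridge m γ) (hδ : IsBridge r δ)
    {s : ℕ} (hs : s ≤ m + r) : (cat m γ δ s).2 ≤ (γ m).2 ↔ s ≤ m := by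
  have hδ0 : δ 0 = 0 := by have := hδ.1.1; simp [this]
  constructor
  · intro hy
    by_contra hgt
    push_neg at hgt
    rw [cat_of_ge _ _ (le_of_lt hgt)] at hy
    have : 0 < (δ (s - m)).2 := (hδ.2 (s - m) (by omega) (by omega)).1
    simp only [Prod.snd_add] at hy
    omega
  · intro hsm
    rw [cat_of_le hδ0 hsm]
    exact bridge_y_le hγ hsm

lemma hSet_cons (p : ℕ × (ℕ → ℤ × ℤ)) (M : List (ℕ × (ℕ → ℤ × ℤ))) :
    hSet (p :: M) = insert (hN p) (hSet M) := by
  simp [hSet]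

lemma hN_cast {p : ℕ × (ℕ → ℤ × ℤ)} (h : IsBridge p.1 p.2) :
    ((hN p : ℤ)) = (p.2 p.1).2 := Int.toNat_of_nonneg (bridge_height_nonneg h)

/-- Heights in the tail are strictly smaller (as naturals). -/
lemma tail_hN_lt {p : ℕ × (ℕ → ℤ × ℤ)} {M : List (ℕ × (ℕ → ℤ × ℤ))}
    (hM : ∀ q ∈ M, IsBridge q.1 q.2)
    (hpair : ∀ q ∈ M, (q.2 q.1).2 < (p.2 p.1).2) :
    ∀ s ∈ hSet M, s < hN p := by
  intro s hs
  simp only [hSet, List.mem_toFinset, List.mem_map] at hs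
  obtain ⟨q, hq, rfl⟩ := hs
  have h1 : 0 ≤ (q.2 q.1).2 := bridge_height_nonneg (hM q hq)
  have h2 := hpair q hq
  simp only [hN]
  omega

/-- The main injectivity lemma: a list of bridges with strictly decreasing heights is
determined by its total length, concatenation and set of heights. -/
lemma catList_inj : ∀ (L L' : List (ℕ × (ℕ → ℤ × ℤ))),
    (∀ p ∈ L, IsBridge p.1 p.2) → (∀ p ∈ L', IsBridge p.1 p.2) →
    L.Pairwise (fun p q => (q.2 q.1).2 < (p.2 p.1).2) →
    L'.Pairwise (fun p q => (q.2 q.1).2 < (p.2 p.1).2) →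
    sumLen L = sumLen L' → catList L = catList L' → hSet L = hSet L' → L = L' := by
  intro L
  induction L with
  | nil =>
    intro L' _ hb' _ _ _ _ hset
    cases L' with
    | nil => rfl
    | cons p M =>
      exfalso
      have : hN p ∈ hSet ([] : List (ℕ × (ℕ → ℤ × ℤ))) := by
        rw [hset, hSet_cons]; exact Finset.mem_insert_self _ _
      simpa [hSet] using this
  | cons p M ih =>
    intro L' hb hb' hpw hpw' hlen hcat hset
    cases L' with
    | nil =>
      exfalso
      have : hN p ∈ hSet ([] : List (ℕ × (ℕ → ℤ × ℤ))) := by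
        rw [← hset, hSet_cons]; exact Finset.mem_insert_self _ _
      simpa [hSet] using this
    | cons p' M' =>
      -- basic facts
      have hbp : IsBridge p.1 p.2 := hb p List.mem_cons_self
      have hbp' : IsBridge p'.1 p'.2 := hb' p' List.mem_cons_self
      have hbM : ∀ q ∈ M, IsBridge q.1 q.2 := fun q hq => hb q (List.mem_cons_of_mem _ hq)
      have hbM' : ∀ q ∈ M', IsBridge q.1 q.2 := fun q hq => hb' q (List.mem_cons_of_mem _ hq)
      have hBM : IsBridge (sumLen M) (catList M) := catList_isBridge hbM
      have hBM' : IsBridge (sumLen M') (catList M') := catList_isBridge hbM'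
      have hltM : ∀ s ∈ hSet M, s < hN p :=
        tail_hN_lt hbM (fun q hq => (List.pairwise_cons.1 hpw).1 q hq)
      have hltM' : ∀ s ∈ hSet M', s < hN p' :=
        tail_hN_lt hbM' (fun q hq => (List.pairwise_cons.1 hpw').1 q hq)
      -- Step 1: equal head heights
      have hhd : hN p = hN p' := by
        have m1 : hN p ∈ insert (hN p') (hSet M') := by
          rw [← hSet_cons, ← hset, hSet_cons]; exact Finset.mem_insert_self _ _
        have m2 : hN p' ∈ insert (hN p) (hSet M) := by
          rw [← hSet_cons, hset, hSet_cons]; exact Finset.mem_insert_self _ _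
        rcases Finset.mem_insert.1 m1 with h | h
        · exact h
        · have h1 := hltM' _ h
          rcases Finset.mem_insert.1 m2 with h' | h'
          · omega
          · have h2 := hltM _ h'
            omega
      have hheight : (p.2 p.1).2 = (p'.2 p'.1).2 := by
        rw [← hN_cast hbp, ← hN_cast hbp', hhd]
      -- Step 2: equal head lengths
      have hsum : p.1 + sumLen M = p'.1 + sumLen M' := by
        have e1 : sumLen (p :: M) = p.1 + sumLen M := by simp [sumLen]
        have e2 : sumLen (p' :: M') = p'.1 + sumLen M' := by simp [sumLen]
        rw [← e1, ← e2, hlen]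
      have hcat2 : cat p.1 p.2 (catList M) = cat p'.1 p'.2 (catList M') := hcat
      have hmm : p.1 = p'.1 := by
        have c1 : ∀ s ≤ p.1 + sumLen M,
            ((cat p.1 p.2 (catList M) s).2 ≤ (p.2 p.1).2 ↔ s ≤ p.1) :=
          fun s hs => cat_split_char hbp hBM hs
        have c2 : ∀ s ≤ p'.1 + sumLen M',
            ((cat p'.1 p'.2 (catList M') s).2 ≤ (p'.2 p'.1).2 ↔ s ≤ p'.1) :=
          fun s hs => cat_split_char hbp' hBM' hs
        have h1 : p.1 ≤ p'.1 := by
          have := (c1 p.1 (by omega)).2 le_rfl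
          rw [hcat2, hheight] at this
          exact (c2 p.1 (by omega)).1 this
        have h2 : p'.1 ≤ p.1 := by
          have := (c2 p'.1 (by omega)).2 le_rfl
          rw [← hcat2, ← hheight] at this
          exact (c1 p'.1 (by omega)).1 this
        omega
      -- Step 3: equal head walks
      have hγ : p.2 = p'.2 := by
        funext t
        rw [cat_left_recover (δ := catList M) hbp.1 (by rw [catList_zero hbM]; rfl) t, hcat2, hmm,
          ← cat_left_recover (δ := catList M') hbp'.1 (by rw [catList_zero hbM']; rfl) t]
      -- Step 4: equal tail concatenations
      have hrest : catList M = catList M' := by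
        have hr : sumLen M = sumLen M' := by omega
        funext t
        rw [cat_right_recover (γ := p.2) (m := p.1) hBM.1 (by rw [catList_zero hbM]; rfl) t,
          hcat2, hmm, hr,
          ← cat_right_recover (γ := p'.2) (m := p'.1) hBM'.1 (by rw [catList_zero hbM']; rfl) t]
      -- Step 5: equal tail height sets
      have hsets : hSet M = hSet M' := by
        have n1 : hN p ∉ hSet M := fun h => lt_irrefl _ (hltM _ h)
        have n2 : hN p' ∉ hSet M' := fun h => lt_irrefl _ (hltM' _ h)
        have e : insert (hN p) (hSet M) = insert (hN p') (hSet M') := by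
          rw [← hSet_cons, ← hSet_cons, hset]
        calc hSet M = (insert (hN p) (hSet M)).erase (hN p) := (Finset.erase_insert n1).symm
          _ = (insert (hN p') (hSet M')).erase (hN p') := by rw [e, hhd]
          _ = hSet M' := Finset.erase_insert n2
      -- Conclude
      have htail : M = M' := ih M' hbM hbM' (List.Pairwise.of_cons hpw) (List.Pairwise.of_cons hpw')
        (by omega) hrest hsets
      rw [htail, Prod.ext hmm hγ]

/-! ### Counting bridge lists -/

section BPiLemmas

variable {ℓ j : ℕ} {b : Fin j → ℕ × (ℕ → ℤ × ℤ)}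

lemma bpi_bridges (hb : b ∈ BPi ℓ j) : ∀ p ∈ List.ofFn b, IsBridge p.1 p.2 := by
  intro p hp
  obtain ⟨i, rfl⟩ := List.mem_ofFn.1 hp
  exact hb.1 i

lemma bpi_pairwise (hb : b ∈ BPi ℓ j) :
    (List.ofFn b).Pairwise (fun p q => (q.2 q.1).2 < (p.2 p.1).2) :=
  List.pairwise_ofFn.2 (fun i k hik => hb.2.2 hik)

lemma bpi_sumLen (hb : b ∈ BPi ℓ j) : sumLen (List.ofFn b) = ℓ := by
  rw [sumLen, List.map_ofFn, List.sum_ofFn]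
  exact hb.2.1

lemma bpi_hN_lt (hb : b ∈ BPi ℓ j) {i k : Fin j} (hik : i < k) : hN (b k) < hN (b i) := by
  have h1 : ((b k).2 (b k).1).2 < ((b i).2 (b i).1).2 := hb.2.2 hik
  have h2 := bridge_height_nonneg (hb.1 k)
  simp only [hN]
  omega

lemma bpi_hN_inj (hb : b ∈ BPi ℓ j) : Function.Injective (fun i : Fin j => hN (b i)) := by
  intro i k h
  simp only [] at h
  rcases lt_trichotomy i k with hik | hik | hik
  · have := bpi_hN_lt hb hik; omega
  · exact hik
  · have := bpi_hN_lt hb hik; omega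

lemma bpi_hSet_eq (hb : b ∈ BPi ℓ j) :
    hSet (List.ofFn b) = Finset.image (fun i : Fin j => hN (b i)) Finset.univ := by
  ext s
  simp [hSet, List.mem_ofFn, eq_comm]

lemma bpi_hSet_card (hb : b ∈ BPi ℓ j) : (hSet (List.ofFn b)).card = j := by
  rw [bpi_hSet_eq hb, Finset.card_image_of_injective _ (bpi_hN_inj hb), Finset.card_univ,
    Fintype.card_fin]

lemma bpi_hSet_sum (hb : b ∈ BPi ℓ j) : (hSet (List.ofFn b)).sum id ≤ ℓ := by
  rw [bpi_hSet_eq hb, Finset.sum_image (fun i _ k _ h => bpi_hN_inj hb h)]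
  calc (∑ i : Fin j, id (hN (b i))) ≤ ∑ i : Fin j, (b i).1 := by
        apply Finset.sum_le_sum
        intro i _
        exact Int.toNat_le.2 (bridge_height_le_length (hb.1 i))
    _ = ℓ := hb.2.1

lemma bpi_hSet_subset (hb : b ∈ BPi ℓ j) :
    hSet (List.ofFn b) ⊆ Finset.range (ℓ + 1) := by
  rw [bpi_hSet_eq hb]
  intro s hs
  obtain ⟨i, _, rfl⟩ := Finset.mem_image.1 hs
  have h1 : hN (b i) ≤ (b i).1 := Int.toNat_le.2 (bridge_height_le_length (hb.1 i))
  have h2 : (b i).1 ≤ ℓ := by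
    rw [← hb.2.1]
    exact Finset.single_le_sum (f := fun i => (b i).1) (fun i _ => Nat.zero_le _) (Finset.mem_univ i)
  rw [Finset.mem_range]
  omega

lemma bpi_isBridge (hb : b ∈ BPi ℓ j) : IsBridge ℓ (catList (List.ofFn b)) :=
  bpi_sumLen hb ▸ catList_isBridge (bpi_bridges hb)

end BPiLemmas

lemma bpi_card_le (ℓ j : ℕ) :
    Nat.card (BPi ℓ j) ≤ cSAB ℓ *
      (((Finset.range (ℓ+1)).powerset.filter (fun S => S.sum id ≤ ℓ ∧ S.card = j)).card) := by
  classical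
  haveI := finite_isBridge ℓ
  set T := ((Finset.range (ℓ+1)).powerset.filter
    (fun S => S.sum id ≤ ℓ ∧ S.card = j)) with hT
  have htarget : cSAB ℓ * T.card
      = Nat.card ({γ : ℕ → ℤ × ℤ // IsBridge ℓ γ} × {S : Finset ℕ // S ∈ T}) := by
    rw [Nat.card_prod, cSAB, Nat.card_eq_finsetCard]
  rw [htarget]
  have hmemT : ∀ b : ↥(BPi ℓ j), hSet (List.ofFn b.1) ∈ T := by
    intro b
    rw [hT, Finset.mem_filter, Finset.mem_powerset]
    exact ⟨bpi_hSet_subset b.2, bpi_hSet_sum b.2, bpi_hSet_card b.2⟩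
  apply Nat.card_le_card_of_injective
    (fun b : ↥(BPi ℓ j) =>
      ((⟨catList (List.ofFn b.1), bpi_isBridge b.2⟩ : {γ : ℕ → ℤ × ℤ // IsBridge ℓ γ}),
       (⟨hSet (List.ofFn b.1), hmemT b⟩ : {S : Finset ℕ // S ∈ T})))
  intro b b' h
  rw [Prod.mk.injEq, Subtype.mk.injEq, Subtype.mk.injEq] at h
  have := catList_inj (List.ofFn b.1) (List.ofFn b'.1) (bpi_bridges b.2) (bpi_bridges b'.2)
    (bpi_pairwise b.2) (bpi_pairwise b'.2)
    (by rw [bpi_sumLen b.2, bpi_sumLen b'.2]) h.1 h.2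
  exact Subtype.ext (List.ofFn_inj.1 this)

lemma sum_filter_card_le (ℓ : ℕ) :
    ∑ j ∈ Finset.Icc 1 ℓ, (((Finset.range (ℓ+1)).powerset.filter
        (fun S => S.sum id ≤ ℓ ∧ S.card = j)).card)
      ≤ ((Finset.range (ℓ+1)).powerset.filter (fun S => S.sum id ≤ ℓ)).card := by
  classical
  rw [← Finset.card_biUnion]
  · apply Finset.card_le_card
    intro S hS
    rw [Finset.mem_biUnion] at hS
    obtain ⟨k, _, hk⟩ := hS
    rw [Finset.mem_filter] at hk ⊢
    exact ⟨hk.1, hk.2.1⟩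
  · intro x _ y _ hxy
    simp only [Function.onFun]
    rw [Finset.disjoint_left]
    intro S hS1 hS2
    rw [Finset.mem_filter] at hS1 hS2
    exact hxy (hS1.2.2 ▸ hS2.2.2)

/-! ### The number of subsets with small sum -/

lemma subset_count_bound (ℓ : ℕ) {x : ℝ} (hx0 : 0 < x) (hx1 : x < 1) :
    ((((Finset.range (ℓ+1)).powerset.filter (fun S => S.sum id ≤ ℓ)).card : ℝ)) * x ^ ℓ
      ≤ Real.exp (1 / (1 - x)) := by
  classical
  set A := (Finset.range (ℓ+1)).powerset with hA
  set T := A.filter (fun S => S.sum id ≤ ℓ) with hTT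
  have step1 : (T.card : ℝ) * x ^ ℓ ≤ ∑ S ∈ T, x ^ (S.sum id) := by
    rw [← nsmul_eq_mul]
    apply Finset.card_nsmul_le_sum
    intro S hS
    rw [hTT, Finset.mem_filter] at hS
    exact pow_le_pow_of_le_one (le_of_lt hx0) (le_of_lt hx1) hS.2
  have step2 : ∑ S ∈ T, x ^ (S.sum id) ≤ ∑ S ∈ A, x ^ (S.sum id) :=
    Finset.sum_le_sum_of_subset_of_nonneg (Finset.filter_subset _ _)
      (fun S _ _ => by positivity)
  have step3 : ∑ S ∈ A, x ^ (S.sum id) = ∏ k ∈ Finset.range (ℓ+1), (x ^ k + 1) := by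
    rw [Finset.prod_add]
    simp only [Finset.prod_const_one, mul_one]
    rw [hA]
    apply Finset.sum_congr rfl
    intro t _
    rw [← Finset.prod_pow_eq_pow_sum]
    simp only [id]
  have step4 : ∏ k ∈ Finset.range (ℓ+1), (x ^ k + 1)
      ≤ Real.exp (∑ k ∈ Finset.range (ℓ+1), x ^ k) := by
    rw [Real.exp_sum]
    apply Finset.prod_le_prod
    · intro k _; positivity
    · intro k _
      have := Real.add_one_le_exp (x ^ k)
      linarith
  have step5 : ∑ k ∈ Finset.range (ℓ+1), x ^ k ≤ 1 / (1 - x) := by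
    have h1x : (0:ℝ) < 1 - x := by linarith
    rw [le_div_iff₀ h1x]
    have hgm := geom_sum_mul x (ℓ+1)
    nlinarith [pow_nonneg (le_of_lt hx0) (ℓ+1)]
  calc (T.card : ℝ) * x ^ ℓ ≤ ∑ S ∈ A, x ^ (S.sum id) := le_trans step1 step2
    _ ≤ Real.exp (∑ k ∈ Finset.range (ℓ+1), x ^ k) := step3 ▸ step4
    _ ≤ Real.exp (1 / (1 - x)) := Real.exp_le_exp.2 step5

lemma one_le_sqrt {ℓ : ℕ} (hl : 1 ≤ ℓ) : (1:ℝ) ≤ Real.sqrt ℓ := by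
  rw [show (1:ℝ) = Real.sqrt 1 by simp]
  exact Real.sqrt_le_sqrt (by exact_mod_cast hl)

lemma count_le (ℓ : ℕ) (hl : 1 ≤ ℓ) :
    ((((Finset.range (ℓ+1)).powerset.filter (fun S => S.sum id ≤ ℓ)).card : ℝ))
      ≤ Real.exp (4 * Real.sqrt ℓ) := by
  classical
  set N := (((Finset.range (ℓ+1)).powerset.filter (fun S => S.sum id ≤ ℓ)).card) with hN
  have hs1 : (1:ℝ) ≤ Real.sqrt ℓ := one_le_sqrt hl
  rcases le_or_gt ℓ 3 with hsmall | hbig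
  · have h1 : (N:ℝ) ≤ 2 ^ (ℓ+1) := by
      have h : N ≤ 2 ^ (ℓ+1) := by
        calc N ≤ (Finset.range (ℓ+1)).powerset.card :=
              Finset.card_le_card (Finset.filter_subset _ _)
          _ = 2 ^ (ℓ+1) := by rw [Finset.card_powerset, Finset.card_range]
      exact_mod_cast h
    have h2 : (2:ℝ) ^ (ℓ+1) ≤ 2 ^ 4 := by
      apply pow_le_pow_right₀ (by norm_num) (by omega)
    have he : (2:ℝ) < Real.exp 1 := lt_trans (by norm_num) Real.exp_one_gt_d9
    have h3 : (2:ℝ) ^ 4 ≤ Real.exp 4 := by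
      calc (2:ℝ) ^ 4 ≤ (Real.exp 1) ^ 4 := pow_le_pow_left₀ (by norm_num) (le_of_lt he) 4
        _ = Real.exp 4 := by rw [← Real.exp_nat_mul]; norm_num
    have h4 : Real.exp 4 ≤ Real.exp (4 * Real.sqrt ℓ) := by
      apply Real.exp_le_exp.2
      nlinarith
    linarith
  · have hl4 : (4:ℕ) ≤ ℓ := by omega
    set s := Real.sqrt ℓ with hsdef
    have hs2 : (2:ℝ) ≤ s := by
      rw [hsdef, show (2:ℝ) = Real.sqrt 4 by
        rw [show (4:ℝ) = 2^2 by norm_num, Real.sqrt_sq (by norm_num)]]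
      exact Real.sqrt_le_sqrt (by exact_mod_cast hl4)
    have hs0 : (0:ℝ) < s := by linarith
    have hss : s * s = (ℓ:ℝ) := Real.mul_self_sqrt (by positivity)
    set t := 1 / s with htdef
    have ht0 : 0 < t := by positivity
    have ht2 : t ≤ 1/2 := by
      rw [htdef]
      rw [div_le_div_iff₀ hs0 (by norm_num)]
      linarith
    set x := 1 - t with hxdef
    have hx0 : (0:ℝ) < x := by rw [hxdef]; linarith
    have hx1 : x < 1 := by rw [hxdef]; linarith
    have key := subset_count_bound ℓ hx0 hx1
    have hinv : 1 / (1 - x) = s := by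
      rw [hxdef, htdef]
      field_simp
      ring
    have hxe : Real.exp (-(2*t)) ≤ x := by
      have he : 1 + 2*t ≤ Real.exp (2*t) := by
        have := Real.add_one_le_exp (2*t); linarith
      have hpos : (0:ℝ) < 1 + 2*t := by linarith
      have h1 : Real.exp (-(2*t)) ≤ 1/(1+2*t) := by
        rw [Real.exp_neg, one_div]
        exact inv_anti₀ hpos he
      have h2 : 1/(1+2*t) ≤ x := by
        rw [div_le_iff₀ hpos, hxdef]
        nlinarith
      linarith
    have hts : (ℓ:ℝ) * t = s := by
      rw [htdef]
      field_simp
      linarith [hss]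
    have hxl : Real.exp (-(2*s)) ≤ x ^ ℓ := by
      have e1 : Real.exp (-(2*s)) = (Real.exp (-(2*t))) ^ ℓ := by
        rw [← Real.exp_nat_mul]
        congr 1
        nlinarith [hts]
      rw [e1]
      exact pow_le_pow_left₀ (le_of_lt (Real.exp_pos _)) hxe ℓ
    have hcard : (N:ℝ) * Real.exp (-(2*s)) ≤ Real.exp s := by
      calc (N:ℝ) * Real.exp (-(2*s)) ≤ (N:ℝ) * x ^ ℓ :=
            mul_le_mul_of_nonneg_left hxl (Nat.cast_nonneg N)
        _ ≤ Real.exp (1/(1-x)) := key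
        _ = Real.exp s := by rw [hinv]
    have hfin : (N:ℝ) ≤ Real.exp (3*s) := by
      have h1 : (N:ℝ) ≤ Real.exp s / Real.exp (-(2*s)) := by
        rw [le_div_iff₀ (Real.exp_pos _)]
        exact hcard
      rwa [← Real.exp_sub, show s - (-(2*s)) = 3*s by ring] at h1
    calc (N:ℝ) ≤ Real.exp (3*s) := hfin
      _ ≤ Real.exp (4*s) := Real.exp_le_exp.2 (by linarith)

/-- There exists `C > 0` such that for all `ℓ ∈ ℕ` the total number of bridge-lists of
combined length `ℓ` with strictly decreasing heights is at most `exp(C ℓ^{1/2}) μ^ℓ`. -/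
theorem bpi_total_card_le :
    ∃ C : ℝ, 0 < C ∧ ∀ ℓ : ℕ, 1 ≤ ℓ →
      (∑ j ∈ Finset.Icc 1 ℓ, (Nat.card ↥(BPi ℓ j) : ℝ))
        ≤ Real.exp (C * Real.sqrt ℓ) * mu ^ ℓ := by
  refine ⟨4, by norm_num, fun ℓ hl => ?_⟩
  have hmu : (cSAB ℓ : ℝ) ≤ mu ^ ℓ := cSAB_le_mu_pow hl
  have h1 : ∀ j ∈ Finset.Icc 1 ℓ, (Nat.card ↥(BPi ℓ j) : ℝ)
      ≤ (cSAB ℓ : ℝ) * (((Finset.range (ℓ+1)).powerset.filter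
        (fun S => S.sum id ≤ ℓ ∧ S.card = j)).card : ℝ) := by
    intro j _
    exact_mod_cast bpi_card_le ℓ j
  calc (∑ j ∈ Finset.Icc 1 ℓ, (Nat.card ↥(BPi ℓ j) : ℝ))
      ≤ ∑ j ∈ Finset.Icc 1 ℓ, (cSAB ℓ : ℝ) * (((Finset.range (ℓ+1)).powerset.filter
          (fun S => S.sum id ≤ ℓ ∧ S.card = j)).card : ℝ) := Finset.sum_le_sum h1
    _ = (cSAB ℓ : ℝ) * ∑ j ∈ Finset.Icc 1 ℓ, (((Finset.range (ℓ+1)).powerset.filter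
          (fun S => S.sum id ≤ ℓ ∧ S.card = j)).card : ℝ) := by rw [← Finset.mul_sum]
    _ ≤ (cSAB ℓ : ℝ) * (((Finset.range (ℓ+1)).powerset.filter
          (fun S => S.sum id ≤ ℓ)).card : ℝ) := by
        apply mul_le_mul_of_nonneg_left _ (Nat.cast_nonneg _)
        exact_mod_cast sum_filter_card_le ℓ
    _ ≤ mu ^ ℓ * Real.exp (4 * Real.sqrt ℓ) :=
        mul_le_mul hmu (count_le ℓ hl) (Nat.cast_nonneg _) (le_of_lt (pow_pos mu_pos ℓ))
    _ = Real.exp (4 * Real.sqrt ℓ) * mu ^ ℓ := mul_comm _ _
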